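/- For u, z ∈ ℍⁿ with |u| < 1 and |z| ≤ 1, the quaternionic Hua map Φ_u(z) = (u − A_u z)(1 − ⟨z,u⟩)⁻¹ satisfies the norm identity |Φ_u(z)|² = 1 − (1−|u|²)(1−|z|²)/|1 − ⟨z,u⟩|², where ⟨z,u⟩ = u* z. In particular this requires verifying |u − A_u z|² = |1 − ⟨z,u⟩|² − (1−|u|²)(1−|z|²). -/

import Mathlib

noncomputable section

abbrev ℍ := Quaternion ℝ

/-- Hermitian inner product ⟨z,w⟩ = w* z = ∑ conj(wᵢ) zᵢ on the right ℍ-module ℍⁿ. -/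
def qinner {n : ℕ} (z w : Fin n → ℍ) : ℍ := ∑ i, star (w i) * z i

/-- Squared norm |u|² = ∑ |uᵢ|². -/
def qnormSq {n : ℕ} (u : Fin n → ℍ) : ℝ := ∑ i, ‖u i‖ ^ 2

/-- Norm |u|. -/
def qnorm {n : ℕ} (u : Fin n → ℍ) : ℝ := Real.sqrt (qnormSq u)

/-- The Hua operator A_u = (1/(1+s))·u u* + s·I, with s = √(1−|u|²). -/
def Au {n : ℕ} (u : Fin n → ℍ) (x : Fin n → ℍ) : Fin n → ℍ :=
  fun i => ((1 + Real.sqrt (1 - qnormSq u))⁻¹) • (u i * qinner x u)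
    + (Real.sqrt (1 - qnormSq u)) • x i

/-- The quaternionic Hua map Φ_u(z) = (u − A_u z)(1 − ⟨z,u⟩)⁻¹. -/
def Phiu {n : ℕ} (u : Fin n → ℍ) (z : Fin n → ℍ) : Fin n → ℍ :=
  fun i => (u i - Au u z i) * (1 - qinner z u)⁻¹

lemma re_mul_comm (p q : ℍ) : (p * q).re = (q * p).re := by
  simp only [Quaternion.re_mul]; ring

lemma normSq_sub' (p q : ℍ) :
    Quaternion.normSq (p - q)
      = Quaternion.normSq p + Quaternion.normSq q - 2 * (p * star q).re := by
  have := Quaternion.normSq_add p (-q)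
  simp only [Quaternion.normSq_neg, star_neg, mul_neg, Quaternion.re_neg] at this
  rw [sub_eq_add_neg, this]; ring

lemma re_sum {n : ℕ} (f : Fin n → ℍ) : (∑ i, f i).re = ∑ i, (f i).re := by
  classical
  induction (Finset.univ : Finset (Fin n)) using Finset.induction with
  | empty => simp [Quaternion.re_zero]
  | insert h ih => simp_all [Finset.sum_insert]

lemma norm_sq_eq_normSq (q : ℍ) : ‖q‖ ^ 2 = Quaternion.normSq q := by
  rw [sq, ← Quaternion.normSq_eq_norm_mul_self]

lemma normSq_one' : Quaternion.normSq (1 : ℍ) = 1 := map_one _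

theorem Phiu_norm_identity {n : ℕ} (u z : Fin n → ℍ)
    (hu : qnorm u < 1) (hz : qnorm z ≤ 1) :
    qnormSq (fun i => u i - Au u z i)
      = ‖1 - qinner z u‖ ^ 2 - (1 - qnormSq u) * (1 - qnormSq z) ∧
    qnormSq (Phiu u z)
      = 1 - (1 - qnormSq u) * (1 - qnormSq z) / ‖1 - qinner z u‖ ^ 2 := by
  set U := qnormSq u with hUdef
  set Z := qnormSq z with hZdef
  set a := qinner z u with hadef
  set s := Real.sqrt (1 - U) with hsdef
  have hU0 : 0 ≤ U := Finset.sum_nonneg fun i _ => sq_nonneg _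
  have hZ0 : 0 ≤ Z := Finset.sum_nonneg fun i _ => sq_nonneg _
  have hU1 : U < 1 := by
    have h1 : Real.sqrt U < 1 := hu
    nlinarith [Real.sq_sqrt hU0, Real.sqrt_nonneg U]
  have hZ1 : Z ≤ 1 := by
    have h1 : Real.sqrt Z ≤ 1 := hz
    nlinarith [Real.sq_sqrt hZ0, Real.sqrt_nonneg Z]
  have hs0 : 0 ≤ s := Real.sqrt_nonneg _
  have hs2 : s ^ 2 = 1 - U := Real.sq_sqrt (by linarith)
  have hsne : (1:ℝ) + s ≠ 0 := by positivity
  have hCS : ‖a‖ ^ 2 ≤ U * Z := by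
    have h1 : ‖a‖ ≤ ∑ i, ‖u i‖ * ‖z i‖ := by
      refine (norm_sum_le _ _).trans (Finset.sum_le_sum fun i _ => ?_)
      rw [norm_mul, norm_star]
    have h2 : (∑ i, ‖u i‖ * ‖z i‖) ^ 2 ≤ U * Z :=
      Finset.sum_mul_sq_le_sq_mul_sq Finset.univ _ _
    have h0 : (0:ℝ) ≤ ∑ i, ‖u i‖ * ‖z i‖ :=
      Finset.sum_nonneg fun i _ => mul_nonneg (norm_nonneg _) (norm_nonneg _)
    nlinarith [norm_nonneg a]
  have haN : ‖a‖ ^ 2 < 1 := lt_of_le_of_lt hCS (by nlinarith)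
  have hane : (1 : ℍ) - a ≠ 0 := by
    intro h
    have : a = 1 := (sub_eq_zero.mp h).symm
    rw [this] at haN; simp at haN
  set t : ℝ := (1 + s)⁻¹ with htdef
  set c : ℍ := 1 - t • a with hcdef
  have hpt : ∀ i, u i - Au u z i = u i * c - s • z i := by
    intro i
    simp only [Au, hcdef, ← hadef, ← hUdef, ← hsdef, ← htdef, mul_sub, mul_one,
      mul_smul_comm, sub_add_eq_sub_sub]
  set α := a.re with hαdef
  set N := Quaternion.normSq a with hNdef
  have hN : ‖a‖ ^ 2 = N := norm_sq_eq_normSq a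
  have hNc : Quaternion.normSq c = 1 - 2 * t * α + t ^ 2 * N := by
    rw [hcdef, normSq_sub', Quaternion.normSq_smul, normSq_one', one_mul,
      Quaternion.star_smul]
    simp only [one_mul, Quaternion.re_smul, Quaternion.re_star, smul_eq_mul,
      ← hαdef, ← hNdef]
    ring
  have hstar_a : (∑ i, star (z i) * u i) = star a := by
    rw [hadef, qinner, star_sum]
    exact Finset.sum_congr rfl fun i _ => by rw [star_mul, star_star]
  have hca : (c * star a).re = α - t * N := by
    rw [hcdef, sub_mul, one_mul, smul_mul_assoc, Quaternion.re_sub, Quaternion.re_smul,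
      Quaternion.self_mul_star]
    simp only [Quaternion.re_star, smul_eq_mul, ← hαdef, ← hNdef, Quaternion.re_coe]
  have key : qnormSq (fun i => u i - Au u z i)
      = Quaternion.normSq c * U + s ^ 2 * Z - 2 * s * (α - t * N) := by
    have hterm : ∀ i, ‖u i - Au u z i‖ ^ 2
        = Quaternion.normSq c * ‖u i‖ ^ 2 + s ^ 2 * ‖z i‖ ^ 2
          - 2 * s * (c * (star (z i) * u i)).re := by
      intro i
      rw [hpt i, norm_sq_eq_normSq, normSq_sub', map_mul, Quaternion.normSq_smul,
        norm_sq_eq_normSq, norm_sq_eq_normSq, Quaternion.star_smul, mul_smul_comm,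
        Quaternion.re_smul]
      have h3 : (u i * c * star (z i)).re = (c * (star (z i) * u i)).re := by
        rw [re_mul_comm, ← mul_assoc, re_mul_comm (star (z i) * u i) c]
      rw [h3, smul_eq_mul]; ring
    show (∑ i, ‖u i - Au u z i‖ ^ 2) = _
    rw [Finset.sum_congr rfl fun i _ => hterm i]
    rw [Finset.sum_sub_distrib, Finset.sum_add_distrib, ← Finset.mul_sum, ← Finset.mul_sum,
      ← Finset.mul_sum, ← re_sum, ← Finset.mul_sum, hstar_a, hca]
    rfl
  have hnorm1a : ‖(1:ℍ) - a‖ ^ 2 = 1 - 2 * α + N := by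
    rw [norm_sq_eq_normSq, normSq_sub', normSq_one', one_mul]
    simp only [Quaternion.re_star, ← hαdef, ← hNdef]
    ring
  have part1 : qnormSq (fun i => u i - Au u z i)
      = ‖1 - a‖ ^ 2 - (1 - U) * (1 - Z) := by
    rw [key, hnorm1a, hNc]
    have hU' : U = 1 - s ^ 2 := by linarith
    rw [hU', htdef]
    field_simp
    ring
  refine ⟨part1, ?_⟩
  have hnne : ‖(1:ℍ) - a‖ ≠ 0 := norm_ne_zero_iff.mpr hane
  have part2 : qnormSq (Phiu u z)
      = qnormSq (fun i => u i - Au u z i) * (‖(1:ℍ) - a‖ ^ 2)⁻¹ := by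
    show (∑ i, ‖Phiu u z i‖ ^ 2) = (∑ i, ‖u i - Au u z i‖ ^ 2) * (‖(1:ℍ) - a‖ ^ 2)⁻¹
    rw [Finset.sum_mul]
    refine Finset.sum_congr rfl fun i _ => ?_
    rw [Phiu, ← hadef, norm_mul, norm_inv, mul_pow, inv_pow]
  rw [part2, part1]
  field_simp
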